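/- Standardization is injective on Q-tableaux of a fixed shape with fixed content: if S and S' are Q-tableaux of shape ν/μ with the same multiset of entries and stand(S) = stand(S'), then S = S'. -/

import Mathlib

/-- `θ : ℕ → ℕ` is a strict partition of length `k`. -/
def StrictShape (θ : ℕ → ℕ) (k : ℕ) : Prop :=
  (∀ i, 0 < θ i ↔ i < k) ∧ ∀ i, i + 1 < k → θ (i + 1) < θ i

/-- Box `(i, j)` (0-indexed row, column) of the shifted Young diagram of `θ`:
row `i` occupies columns `i, …, i + θ i - 1`. -/
def ShiftedCell (θ : ℕ → ℕ) (p : ℕ × ℕ) : Prop :=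
  p.1 ≤ p.2 ∧ p.2 < p.1 + θ p.1

/-- Box of the skew shifted diagram `θ/η`. -/
def SkewCell (θ η : ℕ → ℕ) (p : ℕ × ℕ) : Prop :=
  ShiftedCell θ p ∧ ¬ ShiftedCell η p

/-- A letter of the doubled alphabet: an integer value together with a
decoration (`false` = low/underlined ū, `true` = high/overlined ō). -/
abbrev Letter := ℕ × Bool

/-- The order ū1 < ō1 < ū2 < ō2 < ⋯ on the doubled alphabet (non-strict). -/
def lle (a b : Letter) : Prop :=
  a.1 < b.1 ∨ (a.1 = b.1 ∧ (a.2 = true → b.2 = true))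

/-- The order ū1 < ō1 < ū2 < ō2 < ⋯ on the doubled alphabet (strict). -/
def llt (a b : Letter) : Prop :=
  a.1 < b.1 ∨ (a.1 = b.1 ∧ a.2 = false ∧ b.2 = true)

/-- `T` is a semistandard shifted tableau on the set of boxes `Cell`: positive
entries, weakly increasing rows and columns, no low entry on the diagonal,
at most one high `ōi` per column, at most one low `ūj` per row. -/
def IsSSYT (Cell : ℕ × ℕ → Prop) (T : ℕ × ℕ → Letter) : Prop :=
  (∀ p, Cell p → 0 < (T p).1) ∧
  (∀ p q, Cell p → Cell q → p.1 = q.1 → p.2 < q.2 → lle (T p) (T q)) ∧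
  (∀ p q, Cell p → Cell q → p.2 = q.2 → p.1 < q.1 → lle (T p) (T q)) ∧
  (∀ p, Cell p → p.1 = p.2 → (T p).2 = true) ∧
  (∀ p q, Cell p → Cell q → p.2 = q.2 → T p = T q → (T p).2 = true → p = q) ∧
  (∀ p q, Cell p → Cell q → p.1 = q.1 → T p = T q → (T p).2 = false → p = q)

/-- `F`: raise every diagonal entry to high. -/
def raiseDiag (T : ℕ × ℕ → Letter) : ℕ × ℕ → Letter :=
  fun p => if p.1 = p.2 then ((T p).1, true) else T p

/-- A `Q`-tableau: diagonal entries may be low or high, but raising every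
diagonal entry to high yields a semistandard tableau. -/
def IsQTab (Cell : ℕ × ℕ → Prop) (T : ℕ × ℕ → Letter) : Prop :=
  IsSSYT Cell (raiseDiag T)

/-- Fillings take a fixed junk value outside the shape (so tableaux of a
given shape can be counted as functions). -/
def JunkOutside (Cell : ℕ × ℕ → Prop) (T : ℕ × ℕ → Letter) : Prop :=
  ∀ p, ¬ Cell p → T p = (0, true)

/-- Tie-breaking order on positions of equal entries used by standardization:
equal high entries `ōa` are listed north-to-south (then west-to-east), equal
low entries `ūa` west-to-east (then north-to-south). `tieBefore T q p` says
the entry at `q` is listed before the (equal) entry at `p`. -/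
def tieBefore (T : ℕ × ℕ → Letter) (q p : ℕ × ℕ) : Prop :=
  ((T p).2 = true ∧ (q.1 < p.1 ∨ (q.1 = p.1 ∧ q.2 < p.2))) ∨
  ((T p).2 = false ∧ (q.2 < p.2 ∨ (q.2 = p.2 ∧ q.1 < p.1)))

/-- The (0-indexed) position of the entry of `T` at box `p` in the weakly
increasing listing of all entries of `T`, ties broken by `tieBefore`.  The
standardization `stand T` replaces the entry at `p` by `ū(standRank p + 1)`. -/
noncomputable def standRank (Cell : ℕ × ℕ → Prop) (T : ℕ × ℕ → Letter)
    (p : ℕ × ℕ) : ℕ :=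
  {q | Cell q ∧ (llt (T q) (T p) ∨ (T q = T p ∧ tieBefore T q p))}.ncard


lemma llt_irrefl (a : Letter) : ¬ llt a a := by
  simp [llt]

lemma llt_trans {a b c : Letter} (h1 : llt a b) (h2 : llt b c) : llt a c := by
  rcases h1 with h1 | ⟨e1, f1, t1⟩ <;> rcases h2 with h2 | ⟨e2, f2, t2⟩
  · exact Or.inl (h1.trans h2)
  · exact Or.inl (e2 ▸ h1)
  · exact Or.inl (e1 ▸ h2)
  · simp [t1] at f2

lemma llt_trichotomy (a b : Letter) : llt a b ∨ a = b ∨ llt b a := by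
  rcases Nat.lt_trichotomy a.1 b.1 with h | h | h
  · exact Or.inl (Or.inl h)
  · cases ha : a.2 <;> cases hb : b.2
    · exact Or.inr (Or.inl (Prod.ext h (ha.trans hb.symm)))
    · exact Or.inl (Or.inr ⟨h, ha, hb⟩)
    · exact Or.inr (Or.inr (Or.inr ⟨h.symm, hb, ha⟩))
    · exact Or.inr (Or.inl (Prod.ext h (ha.trans hb.symm)))
  · exact Or.inr (Or.inr (Or.inl h))

lemma not_tieBefore_self (T : ℕ × ℕ → Letter) (p : ℕ × ℕ) : ¬ tieBefore T p p := by
  rintro (⟨_, h | ⟨_, h⟩⟩ | ⟨_, h | ⟨_, h⟩⟩) <;> omega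

/-- Standardization is injective on Q-tableaux of a fixed skew shifted shape
with a fixed multiset of entries. -/
theorem standardization_injective (θ η : ℕ → ℕ) (k m : ℕ)
    (hθ : StrictShape θ k) (hη : StrictShape η m) (hle : ∀ i, η i ≤ θ i)
    (S S' : ℕ × ℕ → Letter)
    (hS : IsQTab (SkewCell θ η) S) (hS' : IsQTab (SkewCell θ η) S')
    (hsupp : JunkOutside (SkewCell θ η) S) (hsupp' : JunkOutside (SkewCell θ η) S')
    (hcontent : ∀ a : Letter,
      {p | SkewCell θ η p ∧ S p = a}.ncard = {p | SkewCell θ η p ∧ S' p = a}.ncard)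
    (hstand : ∀ p, SkewCell θ η p →
      standRank (SkewCell θ η) S p = standRank (SkewCell θ η) S' p) :
    S = S' := by
  classical
  -- θ is antitone on its support
  have hθmono : ∀ i, i < k → θ i ≤ θ 0 := by
    intro i hi
    induction i with
    | zero => exact le_refl _
    | succ n ih =>
      have h1 := hθ.2 n hi
      exact le_trans (le_of_lt h1) (ih (by omega))
  -- the skew shape is finite
  have hfin : {p | SkewCell θ η p}.Finite := by
    apply Set.Finite.subset (Set.finite_Icc ((0 : ℕ), (0 : ℕ)) (k, k + θ 0))
    rintro ⟨i, j⟩ ⟨⟨h1, h2⟩, -⟩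
    have h1' : i ≤ j := h1
    have h2' : j < i + θ i := h2
    have hk : i < k := (hθ.1 i).mp (by omega)
    have := hθmono i hk
    simp only [Set.mem_Icc, Prod.mk_le_mk]
    omega
  set C : Finset (ℕ × ℕ) := hfin.toFinset with hCdef
  have hC : ∀ q, q ∈ C ↔ SkewCell θ η q := fun q => hfin.mem_toFinset
  -- equal fiber counts
  have hcnt : ∀ a, (C.filter fun q => S q = a).card
      = (C.filter fun q => S' q = a).card := by
    intro a
    have h0 := hcontent a
    have e : ∀ (T : ℕ × ℕ → Letter),
        {p | SkewCell θ η p ∧ T p = a} = ↑(C.filter fun q => T q = a) := by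
      intro T
      ext q
      simp only [Set.mem_setOf_eq, Finset.coe_filter, hC q]
    rw [e S, e S', Set.ncard_coe_finset, Set.ncard_coe_finset] at h0
    exact h0
  -- equal multisets of entries
  have hM : C.val.map S = C.val.map S' := by
    refine Multiset.ext.mpr fun a => ?_
    have h1 : ∀ (T : ℕ × ℕ → Letter),
        Multiset.count a (C.val.map T) = (C.filter fun q => T q = a).card := by
      intro T
      rw [Multiset.count_map]
      have e : Multiset.filter (fun q => a = T q) C.val
          = Multiset.filter (fun q => T q = a) C.val :=
        Multiset.filter_congr (fun x _ => eq_comm)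
      rw [e]
      rfl
    rw [h1 S, h1 S', hcnt a]
  -- equal counts of entries below any threshold
  have hltcnt : ∀ a, (C.filter fun q => llt (S q) a).card
      = (C.filter fun q => llt (S' q) a).card := by
    intro a
    have h1 : ∀ (T : ℕ × ℕ → Letter),
        (C.filter fun q => llt (T q) a).card
          = Multiset.countP (fun b => llt b a) (C.val.map T) := by
      intro T
      rw [Multiset.countP_map]
      rfl
    rw [h1 S, h1 S', hM]
  -- standRank as a Finset card
  have hrank : ∀ (T : ℕ × ℕ → Letter) (p : ℕ × ℕ),
      standRank (SkewCell θ η) T p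
        = (C.filter fun q => llt (T q) (T p) ∨ (T q = T p ∧ tieBefore T q p)).card := by
    intro T p
    have e : {q | SkewCell θ η q ∧ (llt (T q) (T p) ∨ (T q = T p ∧ tieBefore T q p))}
        = ↑(C.filter fun q => llt (T q) (T p) ∨ (T q = T p ∧ tieBefore T q p)) := by
      ext q
      simp only [Set.mem_setOf_eq, Finset.coe_filter, hC q]
    rw [standRank, e, Set.ncard_coe_finset]
  -- bounds on the rank
  have bounds : ∀ (T : ℕ × ℕ → Letter) (p : ℕ × ℕ), p ∈ C →
      (C.filter fun q => llt (T q) (T p)).card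
        ≤ (C.filter fun q => llt (T q) (T p) ∨ (T q = T p ∧ tieBefore T q p)).card
      ∧ (C.filter fun q => llt (T q) (T p) ∨ (T q = T p ∧ tieBefore T q p)).card
        < (C.filter fun q => llt (T q) (T p)).card + (C.filter fun q => T q = T p).card := by
    intro T p hpC
    have hdisj : Disjoint (C.filter fun q => llt (T q) (T p))
        (C.filter fun q => T q = T p ∧ tieBefore T q p) := by
      rw [Finset.disjoint_left]
      intro q hq1 hq2
      rw [Finset.mem_filter] at hq1 hq2
      exact llt_irrefl (T p) (hq2.2.1 ▸ hq1.2)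
    have hsplit : (C.filter fun q => llt (T q) (T p) ∨ (T q = T p ∧ tieBefore T q p)).card
        = (C.filter fun q => llt (T q) (T p)).card
          + (C.filter fun q => T q = T p ∧ tieBefore T q p).card := by
      rw [Finset.filter_or, Finset.card_union_of_disjoint hdisj]
    have htie : (C.filter fun q => T q = T p ∧ tieBefore T q p).card
        < (C.filter fun q => T q = T p).card := by
      apply Finset.card_lt_card
      have hsub : (C.filter fun q => T q = T p ∧ tieBefore T q p)
          ⊆ C.filter fun q => T q = T p :=
        Finset.monotone_filter_right C (fun q _ h => h.1)
      rw [Finset.ssubset_iff_of_subset hsub]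
      refine ⟨p, Finset.mem_filter.mpr ⟨hpC, rfl⟩, ?_⟩
      rw [Finset.mem_filter]
      rintro ⟨-, -, h⟩
      exact not_tieBefore_self T p h
    exact ⟨hsplit ▸ Nat.le_add_right _ _, by omega⟩
  -- monotonicity of cumulative counts
  have hmono2 : ∀ (T : ℕ × ℕ → Letter) (b b' : Letter), llt b b' →
      (C.filter fun q => llt (T q) b).card + (C.filter fun q => T q = b).card
        ≤ (C.filter fun q => llt (T q) b').card := by
    intro T b b' hbb'
    have hdisj : Disjoint (C.filter fun q => llt (T q) b) (C.filter fun q => T q = b) := by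
      rw [Finset.disjoint_left]
      intro q hq1 hq2
      rw [Finset.mem_filter] at hq1 hq2
      exact llt_irrefl b (hq2.2 ▸ hq1.2)
    rw [← Finset.card_union_of_disjoint hdisj, ← Finset.filter_or]
    apply Finset.card_le_card
    apply Finset.monotone_filter_right
    rintro q _ (h | h)
    · exact llt_trans h hbb'
    · exact h ▸ hbb'
  -- entries agree on the shape
  have key : ∀ p, SkewCell θ η p → S p = S' p := by
    intro p hp
    have hpC : p ∈ C := (hC p).mpr hp
    have hr := hstand p hp
    rw [hrank S p, hrank S' p] at hr
    obtain ⟨A1, A2⟩ := bounds S p hpC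
    obtain ⟨B1, B2⟩ := bounds S' p hpC
    rcases llt_trichotomy (S p) (S' p) with h | h | h
    · exfalso
      have h3 := hmono2 S (S p) (S' p) h
      have h4 := hltcnt (S' p)
      omega
    · exact h
    · exfalso
      have h3 := hmono2 S' (S' p) (S p) h
      have h4 := hltcnt (S p)
      have h5 := hcnt (S p)
      have h6 := hcnt (S' p)
      omega
  funext p
  by_cases hp : SkewCell θ η p
  · exact key p hp
  · rw [hsupp p hp, hsupp' p hp]
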